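/- (Upper bound on the market failure probability.) For every ε > 0, P(|τ_i − τ_j| < ε for some pair (i,j) with 1 ≤ i, j ≤ K, i ≠ j) ≤ C(K,2) − Σ_{i=1}^{K} Σ_{j≠i} ∫_0^∞ α_i(x) exp(−A_i(x) − A_j(x+ε) − A_0(x+ε)) dx, where C(K,2) = K(K−1)/2 is the binomial coefficient. -/

import Mathlib

open MeasureTheory ProbabilityTheory Set Filter

/-- The cumulative hazard `A(t) = ∫_0^t α(s) ds`. -/
noncomputable def cumHaz (α : ℝ → ℝ) (t : ℝ) : ℝ := ∫ s in (0:ℝ)..t, α s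

/-- The first time `s ≥ 0` at which the cumulative hazard reaches level `z`,
i.e. `inf {s ≥ 0 : A(s) ≥ z}`. -/
noncomputable def hitTime (α : ℝ → ℝ) (z : ℝ) : ℝ :=
  sInf {s : ℝ | 0 ≤ s ∧ z ≤ cumHaz α s}

section Det

variable {α : ℝ → ℝ}

lemma cumHaz_zero : cumHaz α 0 = 0 := intervalIntegral.integral_same

lemma cumHaz_intInt (hcont : ContinuousOn α (Set.Ici 0)) {s t : ℝ} (hs : 0 ≤ s) (ht : 0 ≤ t) :
    IntervalIntegrable α volume s t := by
  apply (hcont.mono (fun x hx => ?_)).intervalIntegrable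
  rw [Set.mem_uIcc] at hx
  rcases hx with ⟨h1, _⟩ | ⟨h1, _⟩
  · exact le_trans hs h1
  · exact le_trans ht h1

lemma cumHaz_strictMonoOn (hpos : ∀ t, 0 ≤ t → 0 < α t)
    (hcont : ContinuousOn α (Set.Ici 0)) : StrictMonoOn (cumHaz α) (Set.Ici 0) := by
  intro s hs t ht hst
  have h1 : cumHaz α t - cumHaz α s = ∫ x in s..t, α x := by
    rw [cumHaz, cumHaz, ← intervalIntegral.integral_interval_sub_left
      (cumHaz_intInt hcont le_rfl ht) (cumHaz_intInt hcont le_rfl hs)]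
  have h2 : 0 < ∫ x in s..t, α x := by
    apply intervalIntegral.intervalIntegral_pos_of_pos_on
      (cumHaz_intInt hcont hs ht) _ hst
    intro x hx
    exact hpos x (le_trans hs hx.1.le)
  linarith

lemma cumHaz_monotoneOn (hpos : ∀ t, 0 ≤ t → 0 < α t)
    (hcont : ContinuousOn α (Set.Ici 0)) : MonotoneOn (cumHaz α) (Set.Ici 0) :=
  (cumHaz_strictMonoOn hpos hcont).monotoneOn

lemma cumHaz_nonneg (hpos : ∀ t, 0 ≤ t → 0 < α t)
    (hcont : ContinuousOn α (Set.Ici 0)) {t : ℝ} (ht : 0 ≤ t) : 0 ≤ cumHaz α t := by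
  rcases eq_or_lt_of_le ht with h | h
  · simp [← h, cumHaz_zero]
  · have := cumHaz_strictMonoOn hpos hcont (Set.self_mem_Ici) ht h
    rw [cumHaz_zero] at this
    exact this.le

lemma cumHaz_continuousOn (hcont : ContinuousOn α (Set.Ici 0)) :
    ContinuousOn (cumHaz α) (Set.Ici 0) := by
  intro x hx
  have h1 : ContinuousOn (cumHaz α) (Set.Icc 0 (x + 1)) := by
    have hu : Set.uIcc (0:ℝ) (x+1) = Set.Icc 0 (x+1) := Set.uIcc_of_le (by linarith [hx.out])
    have := intervalIntegral.continuousOn_primitive_interval (μ := volume) (a := 0) (b := x+1)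
      (f := α) ?_
    · rwa [hu] at this
    · rw [hu]
      exact (hcont.mono (Set.Icc_subset_Ici_self)).integrableOn_compact isCompact_Icc
  have h2 := h1 x ⟨hx, by linarith [hx.out]⟩
  apply h2.mono_of_mem_nhdsWithin
  have : Set.Icc 0 (x+1) = Set.Ici 0 ∩ Set.Iic (x+1) := (Set.Ici_inter_Iic).symm
  rw [this]
  exact Filter.inter_mem self_mem_nhdsWithin
    (nhdsWithin_le_nhds (Iic_mem_nhds (by linarith)))

lemma cumHaz_hasDerivAt (hcont : ContinuousOn α (Set.Ici 0)) {x : ℝ} (hx : 0 < x) :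
    HasDerivAt (cumHaz α) (α x) x := by
  have hmem : Set.Ici (0:ℝ) ∈ nhds x := Ici_mem_nhds hx
  have hca : ContinuousAt α x := (hcont x hx.le).continuousAt hmem
  have hsm : StronglyMeasurableAtFilter α (nhds x) volume := by
    refine ContinuousAt.stronglyMeasurableAtFilter isOpen_Ioi (fun y hy => ?_) x hx
    exact (hcont y (Set.mem_Ici.mpr (le_of_lt hy))).continuousAt (Ici_mem_nhds hy)
  exact intervalIntegral.integral_hasDerivAt_right
    (cumHaz_intInt hcont le_rfl hx.le) hsm hca

variable (α) in
def hitSet (z : ℝ) : Set ℝ := {s : ℝ | 0 ≤ s ∧ z ≤ cumHaz α s}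

lemma hitSet_closed (hcont : ContinuousOn α (Set.Ici 0)) (z : ℝ) :
    IsClosed (hitSet α z) := by
  have h : hitSet α z = Set.Ici 0 ∩ (cumHaz α) ⁻¹' (Set.Ici z) := by
    ext s; simp [hitSet, Set.mem_Ici]
  rw [h]
  exact (cumHaz_continuousOn hcont).preimage_isClosed_of_isClosed isClosed_Ici isClosed_Ici

lemma hitSet_nonempty (hinf : Filter.Tendsto (cumHaz α) Filter.atTop Filter.atTop) (z : ℝ) :
    (hitSet α z).Nonempty := by
  obtain ⟨M, hM⟩ := (Filter.tendsto_atTop.mp hinf z).exists_forall_of_atTop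
  exact ⟨max M 0, le_max_right M 0, hM _ (le_max_left M 0)⟩

lemma hitSet_bddBelow (z : ℝ) : BddBelow (hitSet α z) :=
  ⟨0, fun s hs => hs.1⟩

lemma hitTime_mem (hcont : ContinuousOn α (Set.Ici 0))
    (hinf : Filter.Tendsto (cumHaz α) Filter.atTop Filter.atTop) (z : ℝ) :
    hitTime α z ∈ hitSet α z :=
  IsClosed.csInf_mem (hitSet_closed hcont z) (hitSet_nonempty hinf z) (hitSet_bddBelow z)

lemma hitTime_nonneg (hcont : ContinuousOn α (Set.Ici 0))
    (hinf : Filter.Tendsto (cumHaz α) Filter.atTop Filter.atTop) (z : ℝ) :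
    0 ≤ hitTime α z :=
  (hitTime_mem hcont hinf z).1

lemma le_hitTime (hpos : ∀ t, 0 ≤ t → 0 < α t) (hcont : ContinuousOn α (Set.Ici 0))
    (hinf : Filter.Tendsto (cumHaz α) Filter.atTop Filter.atTop)
    {t z : ℝ} (ht : 0 ≤ t) (h : cumHaz α t ≤ z) : t ≤ hitTime α z := by
  apply le_csInf (hitSet_nonempty hinf z)
  · intro s hs
    by_contra hlt
    push_neg at hlt
    have := cumHaz_strictMonoOn hpos hcont hs.1 ht hlt
    linarith [hs.2]

lemma hitTime_le (hinf : Filter.Tendsto (cumHaz α) Filter.atTop Filter.atTop)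
    {t z : ℝ} (ht : 0 ≤ t) (h : z ≤ cumHaz α t) : hitTime α z ≤ t :=
  csInf_le (hitSet_bddBelow z) ⟨ht, h⟩

lemma hitTime_cumHaz (hpos : ∀ t, 0 ≤ t → 0 < α t) (hcont : ContinuousOn α (Set.Ici 0))
    (hinf : Filter.Tendsto (cumHaz α) Filter.atTop Filter.atTop)
    {x : ℝ} (hx : 0 ≤ x) : hitTime α (cumHaz α x) = x :=
  le_antisymm (hitTime_le hinf hx le_rfl) (le_hitTime hpos hcont hinf hx le_rfl)

lemma hitTime_monotone (hinf : Filter.Tendsto (cumHaz α) Filter.atTop Filter.atTop) :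
    Monotone (hitTime α) := by
  intro z1 z2 h
  apply csInf_le_csInf (hitSet_bddBelow z1) (hitSet_nonempty hinf z2)
  intro s hs
  exact ⟨hs.1, le_trans h hs.2⟩

lemma cumHaz_image (hpos : ∀ t, 0 ≤ t → 0 < α t) (hcont : ContinuousOn α (Set.Ici 0))
    (hinf : Filter.Tendsto (cumHaz α) Filter.atTop Filter.atTop) :
    cumHaz α '' (Set.Ioi 0) = Set.Ioi 0 := by
  apply Set.Subset.antisymm
  · rintro _ ⟨x, hx, rfl⟩
    have := cumHaz_strictMonoOn hpos hcont Set.self_mem_Ici (Set.mem_Ici.mpr (le_of_lt hx)) hx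
    rw [cumHaz_zero] at this
    exact this
  · intro y hy
    obtain ⟨M, hM⟩ := (hinf.eventually (Filter.eventually_ge_atTop y)).exists_forall_of_atTop
    set b := max M 1 with hb
    have hb0 : (0:ℝ) ≤ b := le_trans zero_le_one (le_max_right M 1)
    have hyb : y ≤ cumHaz α b := hM b (le_max_left M 1)
    have hIcc : Set.Icc (cumHaz α 0) (cumHaz α b) ⊆ cumHaz α '' Set.Icc 0 b :=
      intermediate_value_Icc hb0 ((cumHaz_continuousOn hcont).mono Set.Icc_subset_Ici_self)
    have hy' : y ∈ Set.Icc (cumHaz α 0) (cumHaz α b) := by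
      rw [cumHaz_zero]
      exact ⟨hy.le, hyb⟩
    obtain ⟨x, hx, hxy⟩ := hIcc hy'
    refine ⟨x, ?_, hxy⟩
    rcases eq_or_lt_of_le hx.1 with h0 | h0
    · exfalso
      rw [← h0, cumHaz_zero] at hxy
      rw [← hxy] at hy
      exact lt_irrefl 0 hy.out
    · exact h0

end Det

noncomputable def expm : Measure ℝ :=
  (volume.restrict (Set.Ioi 0)).withDensity (fun z => ENNReal.ofReal (Real.exp (-z)))

lemma expm_Ioi {t : ℝ} (ht : 0 ≤ t) : expm (Set.Ioi t) = ENNReal.ofReal (Real.exp (-t)) := by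
  rw [expm, withDensity_apply _ measurableSet_Ioi,
    Measure.restrict_restrict measurableSet_Ioi,
    Set.inter_eq_left.mpr (Set.Ioi_subset_Ioi ht)]
  rw [← ofReal_integral_eq_lintegral_ofReal
    ((exp_neg_integrableOn_Ioi t one_pos).congr_fun (by intro x _; simp) measurableSet_Ioi)
    (ae_of_all _ (fun x => (Real.exp_pos _).le))]
  rw [integral_exp_neg_Ioi]

lemma expm_Ioi_neg {t : ℝ} (ht : t ≤ 0) : expm (Set.Ioi t) = 1 := by
  rw [expm, withDensity_apply _ measurableSet_Ioi,
    Measure.restrict_restrict measurableSet_Ioi,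
    Set.inter_eq_right.mpr (Set.Ioi_subset_Ioi ht)]
  have : (1 : ENNReal) = ENNReal.ofReal (Real.exp (-0)) := by simp
  rw [this, ← ofReal_integral_eq_lintegral_ofReal
    ((exp_neg_integrableOn_Ioi 0 one_pos).congr_fun (by intro x _; simp) measurableSet_Ioi)
    (ae_of_all _ (fun x => (Real.exp_pos _).le))]
  rw [integral_exp_neg_Ioi]

instance : IsProbabilityMeasure expm := by
  constructor
  have h : Set.univ = Set.Iic (0:ℝ) ∪ Set.Ioi 0 := by simp
  have h2 : expm (Set.Iic 0) = 0 := by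
    rw [expm, withDensity_apply _ measurableSet_Iic,
      Measure.restrict_restrict measurableSet_Iic]
    simp [Set.Iic_inter_Ioi]
  refine le_antisymm ?_ ?_
  · calc expm Set.univ ≤ expm (Set.Iic 0) + expm (Set.Ioi 0) := h ▸ measure_union_le _ _
      _ = 1 := by rw [h2, expm_Ioi le_rfl]; simp
  · calc (1:ENNReal) = expm (Set.Ioi 0) := by rw [expm_Ioi le_rfl]; simp
      _ ≤ expm Set.univ := measure_mono (Set.subset_univ _)

lemma map_eq_expm {Ω : Type*} [MeasurableSpace Ω] (P : Measure Ω) [IsProbabilityMeasure P]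
    {Z : Ω → ℝ} (hm : Measurable Z)
    (h : ∀ t : ℝ, 0 ≤ t → P {ω | t < Z ω} = ENNReal.ofReal (Real.exp (-t))) :
    P.map Z = expm := by
  have hmap : IsProbabilityMeasure (P.map Z) := Measure.isProbabilityMeasure_map hm.aemeasurable
  refine ext_of_generate_finite (Set.range Set.Ioi) ?_ isPiSystem_Ioi ?_ ?_
  · rw [BorelSpace.measurable_eq (α := ℝ), borel_eq_generateFrom_Ioi]
  · rintro _ ⟨a, rfl⟩
    rw [Measure.map_apply hm measurableSet_Ioi]
    rcases le_or_gt 0 a with ha | ha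
    · rw [expm_Ioi ha, ← h a ha]; rfl
    · rw [expm_Ioi_neg ha.le]
      have h0 : P {ω | 0 < Z ω} = 1 := by rw [h 0 le_rfl]; simp
      refine le_antisymm prob_le_one ?_
      rw [← h0]
      exact measure_mono (fun ω hω => lt_trans ha hω)
  · simp

section Pair

variable {Ω : Type*} [MeasurableSpace Ω] (P : Measure Ω) [IsProbabilityMeasure P]

lemma pair_bound {Zi Zj Z0 : Ω → ℝ}
    (hmi : Measurable Zi) (hmj : Measurable Zj) (hm0 : Measurable Z0)
    (hindep : P.map (fun ω => (Zi ω, (Zj ω, Z0 ω))) = expm.prod (expm.prod expm))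
    {a b c : ℝ → ℝ}
    (hapos : ∀ t, 0 ≤ t → 0 < a t) (hacont : ContinuousOn a (Set.Ici 0))
    (hainf : Filter.Tendsto (cumHaz a) Filter.atTop Filter.atTop)
    (hbpos : ∀ t, 0 ≤ t → 0 < b t) (hbcont : ContinuousOn b (Set.Ici 0))
    (hbinf : Filter.Tendsto (cumHaz b) Filter.atTop Filter.atTop)
    (hcpos : ∀ t, 0 ≤ t → 0 < c t) (hccont : ContinuousOn c (Set.Ici 0))
    (hcinf : Filter.Tendsto (cumHaz c) Filter.atTop Filter.atTop)
    {ε : ℝ} (hε : 0 < ε) :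
    ENNReal.ofReal (∫ x in Set.Ioi (0:ℝ), a x *
        Real.exp (-cumHaz a x - cumHaz b (x + ε) - cumHaz c (x + ε)))
      ≤ P {ω | min (hitTime c (Z0 ω)) (hitTime a (Zi ω)) + ε
          ≤ min (hitTime c (Z0 ω)) (hitTime b (Zj ω))} := by
  classical
  set φ : ℝ → ℝ := fun z => cumHaz b (hitTime a z + ε) with hφ
  set ψ : ℝ → ℝ := fun z => cumHaz c (hitTime a z + ε) with hψ
  have hita_nn : ∀ z, 0 ≤ hitTime a z := hitTime_nonneg hacont hainf
  have harg_mem : ∀ z : ℝ, hitTime a z + ε ∈ Set.Ici (0:ℝ) :=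
    fun z => by
      rw [Set.mem_Ici]
      exact add_nonneg (hita_nn z) hε.le
  have hφmono : Monotone φ := by
    intro z1 z2 h
    exact cumHaz_monotoneOn hbpos hbcont (harg_mem z1) (harg_mem z2)
      (add_le_add_left (hitTime_monotone hainf h) ε)
  have hψmono : Monotone ψ := by
    intro z1 z2 h
    exact cumHaz_monotoneOn hcpos hccont (harg_mem z1) (harg_mem z2)
      (add_le_add_left (hitTime_monotone hainf h) ε)
  have hφnn : ∀ z, 0 ≤ φ z := fun z => cumHaz_nonneg hbpos hbcont (harg_mem z)
  have hψnn : ∀ z, 0 ≤ ψ z := fun z => cumHaz_nonneg hcpos hccont (harg_mem z)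
  set T : Set (ℝ × ℝ × ℝ) := {p | 0 < p.1 ∧ φ p.1 ≤ p.2.1 ∧ ψ p.1 ≤ p.2.2} with hT
  have hTmeas : MeasurableSet T := by
    apply MeasurableSet.inter (measurable_fst measurableSet_Ioi)
    exact MeasurableSet.inter
      (measurableSet_le (hφmono.measurable.comp measurable_fst)
        (measurable_fst.comp measurable_snd))
      (measurableSet_le (hψmono.measurable.comp measurable_fst)
        (measurable_snd.comp measurable_snd))
  -- inclusion
  have hincl : (fun ω => (Zi ω, (Zj ω, Z0 ω))) ⁻¹' T ⊆
      {ω | min (hitTime c (Z0 ω)) (hitTime a (Zi ω)) + ε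
          ≤ min (hitTime c (Z0 ω)) (hitTime b (Zj ω))} := by
    intro ω hω
    obtain ⟨-, h1, h2⟩ := hω
    set x := hitTime a (Zi ω)
    have hxb : x + ε ≤ hitTime b (Zj ω) :=
      le_hitTime hbpos hbcont hbinf (harg_mem _) h1
    have hxc : x + ε ≤ hitTime c (Z0 ω) :=
      le_hitTime hcpos hccont hcinf (harg_mem _) h2
    have : min (hitTime c (Z0 ω)) x + ε ≤ x + ε :=
      add_le_add_left (min_le_right _ _) ε
    exact le_trans this (le_min hxc hxb)
  refine le_trans ?_ (measure_mono hincl)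
  have hmapW : P ((fun ω => (Zi ω, (Zj ω, Z0 ω))) ⁻¹' T) =
      (expm.prod (expm.prod expm)) T := by
    rw [← hindep, Measure.map_apply (hmi.prodMk (hmj.prodMk hm0)) hTmeas]
  rw [hmapW]
  -- lower bound the product measure
  have hprod : (expm.prod (expm.prod expm)) T
      = ∫⁻ z, (expm.prod expm) (Prod.mk z ⁻¹' T) ∂expm :=
    Measure.prod_apply hTmeas
  rw [hprod]
  set g0 : ℝ → ENNReal := fun z =>
    ENNReal.ofReal (Real.exp (-φ z)) * ENNReal.ofReal (Real.exp (-ψ z)) with hg0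
  have hg0meas : Measurable g0 := by
    refine Measurable.mul (f := fun z => ENNReal.ofReal (Real.exp (-φ z)))
      (g := fun z => ENNReal.ofReal (Real.exp (-ψ z))) ?_ ?_
    · exact ENNReal.measurable_ofReal.comp
        (Real.measurable_exp.comp (hφmono.measurable.neg))
    · exact ENNReal.measurable_ofReal.comp
        (Real.measurable_exp.comp (hψmono.measurable.neg))
  have hstep1 : ∫⁻ z in Set.Ioi 0, g0 z ∂expm
      ≤ ∫⁻ z, (expm.prod expm) (Prod.mk z ⁻¹' T) ∂expm := by
    refine le_trans ?_ (setLIntegral_le_lintegral (Set.Ioi 0) _)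
    apply setLIntegral_mono (measurable_measure_prodMk_left hTmeas)
    intro z hz
    have hpre : Prod.mk z ⁻¹' T = Set.Ici (φ z) ×ˢ Set.Ici (ψ z) := by
      ext q
      simp only [T, Set.mem_preimage, Set.mem_setOf_eq, Set.mem_prod, Set.mem_Ici]
      exact ⟨fun h => ⟨h.2.1, h.2.2⟩, fun h => ⟨hz, h.1, h.2⟩⟩
    rw [hpre, Measure.prod_prod]
    apply mul_le_mul'
    · rw [← expm_Ioi (hφnn z)]
      exact measure_mono Set.Ioi_subset_Ici_self
    · rw [← expm_Ioi (hψnn z)]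
      exact measure_mono Set.Ioi_subset_Ici_self
  refine le_trans ?_ hstep1
  -- unfold the density
  have hstep2 : ∫⁻ z in Set.Ioi 0, g0 z ∂expm
      = ∫⁻ z in Set.Ioi 0, ENNReal.ofReal (Real.exp (-z)) * g0 z := by
    have hd : Measurable fun z : ℝ => ENNReal.ofReal (Real.exp (-z)) :=
      (Real.measurable_exp.comp measurable_neg).ennreal_ofReal
    rw [expm, restrict_withDensity measurableSet_Ioi,
      Measure.restrict_restrict measurableSet_Ioi, Set.inter_self,
      lintegral_withDensity_eq_lintegral_mul_non_measurable _ hd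
        (ae_of_all _ (fun z => ENNReal.ofReal_lt_top))]
    simp only [Pi.mul_apply]
  rw [hstep2]
  -- change of variables
  set g : ℝ → ENNReal := fun z => ENNReal.ofReal (Real.exp (-z)) * g0 z with hg
  have hderiv : ∀ x ∈ Set.Ioi (0:ℝ), HasFDerivWithinAt (cumHaz a)
      ((1 : ℝ →L[ℝ] ℝ).smulRight (a x)) (Set.Ioi 0) x := by
    intro x hx
    exact ((cumHaz_hasDerivAt hacont hx).hasDerivWithinAt).hasFDerivWithinAt
  have hinj : Set.InjOn (cumHaz a) (Set.Ioi 0) :=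
    ((cumHaz_strictMonoOn hapos hacont).injOn).mono Set.Ioi_subset_Ici_self
  have hchg : ∫⁻ z in Set.Ioi 0, g z
      = ∫⁻ x in Set.Ioi 0, ENNReal.ofReal |a x| * g (cumHaz a x) := by
    have := lintegral_image_eq_lintegral_abs_det_fderiv_mul volume measurableSet_Ioi hderiv hinj g
    rw [cumHaz_image hapos hacont hainf] at this
    rw [this]
    congr 1
    ext x
    rw [ContinuousLinearMap.det_smulRight, ContinuousLinearMap.one_apply, one_mul]
  rw [show (∫⁻ z in Set.Ioi 0, ENNReal.ofReal (Real.exp (-z)) * g0 z) = ∫⁻ z in Set.Ioi 0, g z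
    from rfl, hchg]
  -- compare with the ofReal of the Bochner integral
  set F : ℝ → ℝ := fun x => a x *
      Real.exp (-cumHaz a x - cumHaz b (x + ε) - cumHaz c (x + ε)) with hF
  have hptwise : ∀ x ∈ Set.Ioi (0:ℝ),
      ENNReal.ofReal (F x) = ENNReal.ofReal |a x| * g (cumHaz a x) := by
    intro x hx
    have hx0 : (0:ℝ) ≤ x := le_of_lt hx
    have hhit : hitTime a (cumHaz a x) = x := hitTime_cumHaz hapos hacont hainf hx0
    have habs : |a x| = a x := abs_of_pos (hapos x hx0)
    have hexp : F x = a x * (Real.exp (-cumHaz a x) *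
        (Real.exp (-cumHaz b (x + ε)) * Real.exp (-cumHaz c (x + ε)))) := by
      rw [hF]
      simp only [sub_eq_add_neg, Real.exp_add]
      ring
    rw [hexp]
    simp only [hg, hg0, hφ, hψ, hhit, habs]
    rw [ENNReal.ofReal_mul (hapos x hx0).le,
      ENNReal.ofReal_mul (Real.exp_pos (-cumHaz a x)).le,
      ENNReal.ofReal_mul (Real.exp_pos (-cumHaz b (x + ε))).le]
    try ring
  calc ENNReal.ofReal (∫ x in Set.Ioi (0:ℝ), F x)
      ≤ ∫⁻ x in Set.Ioi 0, ENNReal.ofReal (F x) := by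
        by_cases hint : IntegrableOn F (Set.Ioi 0) volume
        · rw [ofReal_integral_eq_lintegral_ofReal hint
            ((ae_restrict_iff' measurableSet_Ioi).2 (ae_of_all _ (fun x hx => by
              simp only [hF]
              exact mul_nonneg (hapos x (le_of_lt hx)).le (Real.exp_pos _).le)))]
        · rw [integral_undef hint]
          simp
    _ = ∫⁻ x in Set.Ioi 0, ENNReal.ofReal |a x| * g (cumHaz a x) := by
        apply setLIntegral_congr_fun measurableSet_Ioi
        exact hptwise

end Pair

/-- (Upper bound on the market failure probability.) For every `ε > 0`,
`P(|τ_i − τ_j| < ε for some i ≠ j) ≤ C(K,2) − ∑_{i=1}^K ∑_{j ≠ i} ∫_0^∞ α_i(x)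
  e^{−A_i(x) − A_j(x+ε) − A_0(x+ε)} dx`. -/
theorem market_failure_probability_upper_bound
    {Ω : Type*} [MeasurableSpace Ω] (P : Measure Ω) [IsProbabilityMeasure P]
    (K : ℕ) (Z : Fin (K + 1) → Ω → ℝ) (α : Fin (K + 1) → ℝ → ℝ)
    (hZmeas : ∀ i, Measurable (Z i))
    (hZindep : iIndepFun Z P)
    (hZexp : ∀ i, ∀ t : ℝ, 0 ≤ t → P {ω | t < Z i ω} = ENNReal.ofReal (Real.exp (-t)))
    (hαpos : ∀ i t, 0 ≤ t → 0 < α i t)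
    (hαcont : ∀ i, ContinuousOn (α i) (Set.Ici 0))
    (hAinf : ∀ i, Filter.Tendsto (cumHaz (α i)) Filter.atTop Filter.atTop)
    (ε : ℝ) (hε : 0 < ε) :
    P {ω | ∃ i j : Fin K, i ≠ j ∧
        |min (hitTime (α 0) (Z 0 ω)) (hitTime (α i.succ) (Z i.succ ω))
          - min (hitTime (α 0) (Z 0 ω)) (hitTime (α j.succ) (Z j.succ ω))| < ε}
      ≤ ENNReal.ofReal ((K.choose 2 : ℝ)
          - ∑ i : Fin K, ∑ j ∈ Finset.univ.filter (fun j : Fin K => j ≠ i),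
              ∫ x in Set.Ioi (0 : ℝ), α i.succ x *
                Real.exp (-cumHaz (α i.succ) x - cumHaz (α j.succ) (x + ε)
                  - cumHaz (α 0) (x + ε))) := by
  classical
  set τ : Fin K → Ω → ℝ := fun i ω =>
    min (hitTime (α 0) (Z 0 ω)) (hitTime (α i.succ) (Z i.succ ω)) with hτ
  set I : Fin K → Fin K → ℝ := fun i j => ∫ x in Set.Ioi (0:ℝ), α i.succ x *
      Real.exp (-cumHaz (α i.succ) x - cumHaz (α j.succ) (x + ε)
        - cumHaz (α 0) (x + ε)) with hI
  set D : Fin K → Fin K → Set Ω := fun i j => {ω | |τ i ω - τ j ω| < ε} with hD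
  set G : Fin K → Fin K → Set Ω := fun i j => {ω | τ i ω + ε ≤ τ j ω} with hG
  have hlaw : ∀ k, P.map (Z k) = expm := fun k => map_eq_expm P (hZmeas k) (hZexp k)
  have hτmeas : ∀ i : Fin K, Measurable (τ i) := fun i =>
    ((hitTime_monotone (hAinf 0)).measurable.comp (hZmeas 0)).min
      ((hitTime_monotone (hAinf i.succ)).measurable.comp (hZmeas i.succ))
  have hDmeas : ∀ i j, MeasurableSet (D i j) := fun i j => by
    apply measurableSet_lt (((hτmeas i).sub (hτmeas j)).abs) measurable_const
  have hGmeas : ∀ i j, MeasurableSet (G i j) := fun i j =>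
    measurableSet_le ((hτmeas i).add_const ε) (hτmeas j)
  -- the triple joint law for each pair
  have hmap : ∀ i j : Fin K, i ≠ j →
      P.map (fun ω => (Z i.succ ω, (Z j.succ ω, Z 0 ω))) = expm.prod (expm.prod expm) := by
    intro i j hij
    have hne1 : (j.succ : Fin (K+1)) ≠ i.succ := fun h => hij (Fin.succ_inj.mp h).symm
    have hne2 : (0 : Fin (K+1)) ≠ i.succ := (Fin.succ_ne_zero i).symm
    have hne3 : (j.succ : Fin (K+1)) ≠ 0 := Fin.succ_ne_zero j
    have h1 : IndepFun (Z i.succ) (fun ω => (Z j.succ ω, Z 0 ω)) P :=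
      (hZindep.indepFun_prodMk hZmeas j.succ 0 i.succ hne1 hne2).symm
    have h2 := (indepFun_iff_map_prod_eq_prod_map_map (hZmeas i.succ).aemeasurable
      ((hZmeas j.succ).prodMk (hZmeas 0)).aemeasurable).mp h1
    have h3 : IndepFun (Z j.succ) (Z 0) P := hZindep.indepFun hne3
    have h4 := (indepFun_iff_map_prod_eq_prod_map_map (hZmeas j.succ).aemeasurable
      (hZmeas 0).aemeasurable).mp h3
    rw [h2, h4, hlaw, hlaw, hlaw]
  -- the key per-pair bound
  have hkey : ∀ i j : Fin K, i ≠ j → ENNReal.ofReal (I i j) ≤ P (G i j) := by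
    intro i j hij
    exact pair_bound P (hZmeas i.succ) (hZmeas j.succ) (hZmeas 0) (hmap i j hij)
      (hαpos i.succ) (hαcont i.succ) (hAinf i.succ)
      (hαpos j.succ) (hαcont j.succ) (hAinf j.succ)
      (hαpos 0) (hαcont 0) (hAinf 0) hε
  have hInn : ∀ i j : Fin K, 0 ≤ I i j := fun i j =>
    setIntegral_nonneg measurableSet_Ioi (fun x hx =>
      mul_nonneg (hαpos i.succ x (le_of_lt hx)).le (Real.exp_pos _).le)
  -- per-pair one-bound
  have hone : ∀ i j : Fin K, i ≠ j →
      P (D i j) + ENNReal.ofReal (I i j) + ENNReal.ofReal (I j i) ≤ 1 := by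
    intro i j hij
    have hd1 : Disjoint (G i j) (G j i) := by
      rw [Set.disjoint_left]
      intro ω h1 h2
      simp only [hG, Set.mem_setOf_eq] at h1 h2
      linarith
    have hd2 : Disjoint (D i j) (G i j ∪ G j i) := by
      rw [Set.disjoint_left]
      intro ω h1 h2
      simp only [hD, Set.mem_setOf_eq] at h1
      rcases h2 with h2 | h2 <;> simp only [hG, Set.mem_setOf_eq] at h2
      · have : ε ≤ τ j ω - τ i ω := by linarith
        have h3 := le_abs_self (τ j ω - τ i ω)
        rw [abs_sub_comm] at h3
        linarith
      · have h3 := le_abs_self (τ i ω - τ j ω)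
        linarith
    calc P (D i j) + ENNReal.ofReal (I i j) + ENNReal.ofReal (I j i)
        ≤ P (D i j) + P (G i j) + P (G j i) := by
          gcongr
          · exact hkey i j hij
          · exact hkey j i (Ne.symm hij)
      _ = P (D i j) + (P (G i j) + P (G j i)) := by ring
      _ = P (D i j ∪ (G i j ∪ G j i)) := by
          rw [measure_union hd2 ((hGmeas i j).union (hGmeas j i)),
            measure_union hd1 (hGmeas j i)]
      _ ≤ 1 := prob_le_one
  -- unordered pairs
  set F : Finset (Fin K × Fin K) :=
    Finset.univ.filter (fun p : Fin K × Fin K => p.1 < p.2) with hF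
  set F' : Finset (Fin K × Fin K) :=
    Finset.univ.filter (fun p : Fin K × Fin K => p.2 < p.1) with hF'
  have hcardFF' : F.card = F'.card := by
    apply Finset.card_nbij' (fun p => (p.2, p.1)) (fun p => (p.2, p.1))
    · intro p hp
      simp only [hF, hF', Finset.mem_filter, Finset.mem_univ, true_and] at hp ⊢
      simpa using hp
    · intro p hp
      simp only [hF, hF', Finset.mem_filter, Finset.mem_univ, true_and] at hp ⊢
      simpa using hp
    · intro p _; rfl
    · intro p _; rfl
  have hFunion : Finset.univ.filter (fun p : Fin K × Fin K => p.2 ≠ p.1) = F ∪ F' := by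
    ext p
    simp only [hF, hF', Finset.mem_filter, Finset.mem_univ, true_and, Finset.mem_union]
    constructor
    · intro h
      rcases lt_or_gt_of_ne (Ne.symm h) with h' | h'
      · exact Or.inl h'
      · exact Or.inr h'
    · rintro (h | h) <;> [exact ne_of_gt h; exact ne_of_lt h]
  have hFdisj : Disjoint F F' := by
    rw [Finset.disjoint_left]
    intro p hp hp'
    simp only [hF, hF', Finset.mem_filter] at hp hp'
    exact absurd hp.2 (not_lt_of_gt hp'.2)
  have hcardF : (2 : ℕ) * F.card = K * K - K := by
    have h1 : (Finset.univ.filter (fun p : Fin K × Fin K => p.2 ≠ p.1)).card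
        = F.card + F'.card := by rw [hFunion, Finset.card_union_of_disjoint hFdisj]
    have h2 : (Finset.univ.filter (fun p : Fin K × Fin K => p.2 ≠ p.1)).card = K * K - K := by
      have : Finset.univ.filter (fun p : Fin K × Fin K => p.2 ≠ p.1)
          = (Finset.univ : Finset (Fin K)).offDiag := by
        ext p
        simp only [Finset.mem_filter, Finset.mem_univ, true_and, Finset.mem_offDiag]
        exact ne_comm
      rw [this, Finset.offDiag_card]
      simp
    omega
  have hchoose : F.card = K.choose 2 := by
    have h1 := Nat.choose_two_right K
    have h2 : K * K - K = K * (K - 1) := by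
      cases K with
      | zero => rfl
      | succ n =>
        simp only [Nat.succ_sub_one]
        rw [Nat.mul_succ, Nat.add_sub_cancel]
    omega
  -- reindex the double sum
  have hreindex : ∀ f : Fin K → Fin K → ENNReal,
      (∑ i : Fin K, ∑ j ∈ Finset.univ.filter (fun j : Fin K => j ≠ i), f i j)
        = ∑ p ∈ F, (f p.1 p.2 + f p.2 p.1) := by
    intro f
    have h1 : (∑ i : Fin K, ∑ j ∈ Finset.univ.filter (fun j : Fin K => j ≠ i), f i j)
        = ∑ p ∈ Finset.univ.filter (fun p : Fin K × Fin K => p.2 ≠ p.1), f p.1 p.2 := by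
      rw [Finset.sum_filter]
      simp_rw [Finset.sum_filter]
      rw [← Finset.sum_product']
      rw [Finset.univ_product_univ]
    rw [h1, hFunion, Finset.sum_union hFdisj, Finset.sum_add_distrib]
    congr 1
    apply Finset.sum_nbij' (fun p => (p.2, p.1)) (fun p => (p.2, p.1))
    · intro p hp
      simp only [hF, hF', Finset.mem_filter, Finset.mem_univ, true_and] at hp ⊢
      exact hp
    · intro p hp
      simp only [hF, hF', Finset.mem_filter, Finset.mem_univ, true_and] at hp ⊢
      exact hp
    · intro p _; rfl
    · intro p _; rfl
    · intro p _; rfl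
  -- union bound
  have hE : {ω | ∃ i j : Fin K, i ≠ j ∧ |τ i ω - τ j ω| < ε} ⊆ ⋃ p ∈ F, D p.1 p.2 := by
    intro ω hω
    obtain ⟨i, j, hij, habs⟩ := hω
    rcases lt_or_gt_of_ne hij with h | h
    · exact Set.mem_iUnion₂.2 ⟨(i, j), Finset.mem_filter.mpr ⟨Finset.mem_univ _, h⟩, habs⟩
    · refine Set.mem_iUnion₂.2 ⟨(j, i), Finset.mem_filter.mpr ⟨Finset.mem_univ _, h⟩, ?_⟩
      show |τ j ω - τ i ω| < ε
      rw [abs_sub_comm]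
      exact habs
  have hPE : P {ω | ∃ i j : Fin K, i ≠ j ∧ |τ i ω - τ j ω| < ε}
      ≤ ∑ p ∈ F, P (D p.1 p.2) :=
    le_trans (measure_mono hE) (measure_biUnion_finset_le F _)
  -- put it together
  have hmain : P {ω | ∃ i j : Fin K, i ≠ j ∧ |τ i ω - τ j ω| < ε}
      + ∑ p ∈ F, (ENNReal.ofReal (I p.1 p.2) + ENNReal.ofReal (I p.2 p.1))
      ≤ (K.choose 2 : ENNReal) := by
    calc _ ≤ (∑ p ∈ F, P (D p.1 p.2))
        + ∑ p ∈ F, (ENNReal.ofReal (I p.1 p.2) + ENNReal.ofReal (I p.2 p.1)) :=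
          add_le_add_left hPE _
      _ = ∑ p ∈ F, (P (D p.1 p.2) + ENNReal.ofReal (I p.1 p.2) + ENNReal.ofReal (I p.2 p.1)) := by
          rw [← Finset.sum_add_distrib]
          congr 1
          ext p
          ring
      _ ≤ ∑ p ∈ F, 1 := by
          apply Finset.sum_le_sum
          intro p hp
          have hpF : p.1 < p.2 := by
            simp only [hF, Finset.mem_filter] at hp
            exact hp.2
          exact hone p.1 p.2 (ne_of_lt hpF)
      _ = (F.card : ENNReal) := by simp
      _ = (K.choose 2 : ENNReal) := by rw [hchoose]
  -- final conversion
  have hSsum : ENNReal.ofReal (∑ i : Fin K,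
      ∑ j ∈ Finset.univ.filter (fun j : Fin K => j ≠ i), I i j)
      = ∑ i : Fin K, ∑ j ∈ Finset.univ.filter (fun j : Fin K => j ≠ i),
          ENNReal.ofReal (I i j) := by
    rw [ENNReal.ofReal_sum_of_nonneg]
    · congr 1
      ext i
      rw [ENNReal.ofReal_sum_of_nonneg]
      intro j _
      exact hInn i j
    · intro i _
      exact Finset.sum_nonneg (fun j _ => hInn i j)
  have hS0 : 0 ≤ ∑ i : Fin K,
      ∑ j ∈ Finset.univ.filter (fun j : Fin K => j ≠ i), I i j :=
    Finset.sum_nonneg (fun i _ => Finset.sum_nonneg (fun j _ => hInn i j))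
  rw [ENNReal.ofReal_sub _ hS0]
  apply ENNReal.le_sub_of_add_le_right ENNReal.ofReal_ne_top
  rw [hSsum, hreindex (fun i j => ENNReal.ofReal (I i j))]
  rw [ENNReal.ofReal_natCast]
  exact hmain
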